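/- Let J : ℕ → ℝ be positive and strictly decreasing, N a positive integer, and k ∈ {0,...,N}. For every configuration σ ∈ {-1,+1}^{1,...,N} with exactly k spins equal to +1, ∑_{i=1}^N ∑_{j=1}^N J(|i-j|) 𝟙[σ_i ≠ σ_j] ≥ 2 ∑_{i=1}^k ∑_{j=k+1}^N J(|i-j|). -/

import Mathlib

open Finset

/-- Long-range Ising Hamiltonian with free boundary conditions on {0,...,N-1}:
`H(σ) = -∑_{i<j} J(|i-j|) σᵢ σⱼ - h ∑ᵢ σᵢ`. -/
noncomputable def H (N : ℕ) (J : ℕ → ℝ) (h : ℝ) (σ : Fin N → ℝ) : ℝ :=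
  -(∑ i : Fin N, ∑ j : Fin N,
      if (i : ℕ) < (j : ℕ) then J (Nat.dist (i : ℕ) (j : ℕ)) * σ i * σ j else 0)
    - h * ∑ i : Fin N, σ i

/-- A spin configuration takes values in {-1, +1}. -/
def IsConfig {N : ℕ} (σ : Fin N → ℝ) : Prop := ∀ i, σ i = 1 ∨ σ i = -1

/-- The configuration `L^(k)`: +1 on the first k sites, -1 elsewhere. -/
def Lconf (N k : ℕ) : Fin N → ℝ := fun i => if (i : ℕ) < k then 1 else -1

/-- The configuration `R^(k)`: +1 on the last k sites, -1 elsewhere. -/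
def Rconf (N k : ℕ) : Fin N → ℝ := fun i => if N - k ≤ (i : ℕ) then 1 else -1

/- ### Auxiliary counting machinery -/

/-- Indicator that `i < j` and `j - i ≤ e`. -/
def gcnt (e i j : ℕ) : ℕ := if i < j ∧ j - i ≤ e then 1 else 0

/-- Indicator that `i ≠ j` and `dist i j ≤ e`. -/
def fcnt (e i j : ℕ) : ℕ := if i ≠ j ∧ Nat.dist i j ≤ e then 1 else 0

/-- Number of increasing pairs in `S` at distance at most `e`. -/
def Pcnt (S : Finset ℕ) (e : ℕ) : ℕ := ∑ i ∈ S, ∑ j ∈ S, gcnt e i j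

/-- The corresponding count for an interval of length `k`. -/
def mcnt (k e : ℕ) : ℕ := ∑ q ∈ Finset.range k, min e q

lemma fcnt_eq (e i j : ℕ) : fcnt e i j = gcnt e i j + gcnt e j i := by
  simp only [fcnt, gcnt]; split_ifs <;> simp only [Nat.dist] at * <;> omega

lemma fcnt_comm (e i j : ℕ) : fcnt e i j = fcnt e j i := by
  simp only [fcnt]; split_ifs <;> simp only [Nat.dist] at * <;> omega

lemma gcnt_col_le (e m : ℕ) (S : Finset ℕ) :
    ∑ i ∈ S, gcnt e i m ≤ min e S.card := by
  have h1 : ∑ i ∈ S, gcnt e i m = (S.filter fun i => i < m ∧ m - i ≤ e).card := by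
    rw [Finset.card_filter]; simp [gcnt]
  rw [h1]
  refine le_min ?_ (Finset.card_filter_le _ _)
  calc (S.filter fun i => i < m ∧ m - i ≤ e).card
      ≤ (Finset.Ico (m - e) m).card := by
        apply Finset.card_le_card
        intro x hx
        simp only [Finset.mem_filter] at hx
        simp only [Finset.mem_Ico]; omega
    _ ≤ e := by rw [Nat.card_Ico]; omega

lemma Pcnt_insert_max (e m : ℕ) (S : Finset ℕ) (hm : m ∉ S) (hmax : ∀ i ∈ S, i < m) :
    Pcnt (insert m S) e = Pcnt S e + ∑ i ∈ S, gcnt e i m := by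
  unfold Pcnt
  rw [Finset.sum_insert hm]
  have hrow : ∑ j ∈ insert m S, gcnt e m j = 0 := by
    rw [Finset.sum_insert hm]
    have : ∀ j ∈ S, gcnt e m j = 0 := by
      intro j hj
      have := hmax j hj
      simp only [gcnt]; rw [if_neg]; omega
    rw [Finset.sum_eq_zero this]
    simp [gcnt]
  rw [hrow]
  have hcols : ∑ i ∈ S, ∑ j ∈ insert m S, gcnt e i j
      = ∑ i ∈ S, (∑ j ∈ S, gcnt e i j + gcnt e i m) := by
    apply Finset.sum_congr rfl
    intro i _
    rw [Finset.sum_insert hm, add_comm]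
  rw [hcols, Finset.sum_add_distrib]
  ring

/-- Key counting lemma: a set of size `k` has at most as many close pairs as an
interval of size `k`. -/
lemma Pcnt_le (e : ℕ) (S : Finset ℕ) : Pcnt S e ≤ mcnt S.card e := by
  induction S using Finset.strongInduction with
  | _ S ih =>
    rcases S.eq_empty_or_nonempty with rfl | hne
    · simp [Pcnt, mcnt]
    · set m := S.max' hne with hm
      set S' := S.erase m with hS'
      have hmem : m ∈ S := S.max'_mem hne
      have hms : m ∉ S' := Finset.notMem_erase _ _
      have hmax : ∀ i ∈ S', i < m := by
        intro i hi
        have h1 : i ∈ S := Finset.mem_of_mem_erase hi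
        have h2 : i ≠ m := Finset.ne_of_mem_erase hi
        exact lt_of_le_of_ne (S.le_max' i h1) h2
      have hins : insert m S' = S := Finset.insert_erase hmem
      have hcard : S.card = S'.card + 1 := by
        rw [← hins, Finset.card_insert_of_notMem hms]
      rw [← hins, Pcnt_insert_max e m S' hms hmax, hins, hcard]
      have := ih S' (Finset.erase_ssubset hmem)
      have h2 := gcnt_col_le e m S'
      have : mcnt (S'.card + 1) e = mcnt S'.card e + min e S'.card := by
        simp [mcnt, Finset.sum_range_succ]
      omega

/-- For intervals the count is exactly `mcnt`. -/
lemma Pcnt_Ico (e a k : ℕ) : Pcnt (Finset.Ico a (a + k)) e = mcnt k e := by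
  induction k with
  | zero => simp [Pcnt, mcnt]
  | succ n ih =>
    have hins : Finset.Ico a (a + (n+1)) = insert (a + n) (Finset.Ico a (a + n)) := by
      rw [show a + (n+1) = (a+n) + 1 by ring]
      rw [Nat.Ico_succ_right_eq_insert_Ico (by omega)]
    have hms : a + n ∉ Finset.Ico a (a + n) := by simp
    have hmax : ∀ i ∈ Finset.Ico a (a + n), i < a + n := by
      intro i hi; exact (Finset.mem_Ico.mp hi).2
    rw [hins, Pcnt_insert_max e _ _ hms hmax, ih]
    have hcol : ∑ i ∈ Finset.Ico a (a + n), gcnt e i (a + n) = min e n := by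
      have h1 : ∑ i ∈ Finset.Ico a (a+n), gcnt e i (a+n)
          = ((Finset.Ico a (a+n)).filter fun i => i < a + n ∧ (a+n) - i ≤ e).card := by
        rw [Finset.card_filter]; simp [gcnt]
      have h2 : ((Finset.Ico a (a+n)).filter fun i => i < a + n ∧ (a+n) - i ≤ e)
          = Finset.Ico (max a (a + n - e)) (a + n) := by
        ext x
        simp only [Finset.mem_filter, Finset.mem_Ico]
        omega
      rw [h1, h2, Nat.card_Ico]
      omega
    rw [hcol]
    simp [mcnt, Finset.sum_range_succ]

lemma sum_f_diag (e : ℕ) (S : Finset ℕ) :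
    ∑ i ∈ S, ∑ j ∈ S, fcnt e i j = 2 * Pcnt S e := by
  have : ∑ i ∈ S, ∑ j ∈ S, fcnt e i j
      = ∑ i ∈ S, ∑ j ∈ S, gcnt e i j + ∑ i ∈ S, ∑ j ∈ S, gcnt e j i := by
    simp only [fcnt_eq, Finset.sum_add_distrib]
  rw [this, Finset.sum_comm (f := fun i j => gcnt e j i)]
  unfold Pcnt; ring

lemma sum_f_union (e : ℕ) (A B : Finset ℕ) (hd : Disjoint A B) :
    ∑ i ∈ A ∪ B, ∑ j ∈ A ∪ B, fcnt e i j
      = 2 * Pcnt A e + 2 * Pcnt B e + 2 * ∑ i ∈ A, ∑ j ∈ B, fcnt e i j := by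
  rw [Finset.sum_union hd]
  have hA : ∀ i, ∑ j ∈ A ∪ B, fcnt e i j = ∑ j ∈ A, fcnt e i j + ∑ j ∈ B, fcnt e i j :=
    fun i => Finset.sum_union hd
  simp only [hA, Finset.sum_add_distrib]
  rw [sum_f_diag, sum_f_diag]
  have hBA : ∑ i ∈ B, ∑ j ∈ A, fcnt e i j = ∑ i ∈ A, ∑ j ∈ B, fcnt e i j := by
    rw [Finset.sum_comm]
    simp only [fun i j => fcnt_comm e i j]
  rw [hBA]; ring

/-- The main counting comparison: any partition of `{0,…,N-1}` into a `k`-set and its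
complement has at least as many close disagreeing pairs as the boundary partition. -/
lemma cross_count_ge (N k e : ℕ) (hk : k ≤ N) (A B : Finset ℕ)
    (hU : A ∪ B = Finset.range N) (hd : Disjoint A B) (hA : A.card = k) :
    ∑ i ∈ Finset.range k, ∑ j ∈ Finset.Ico k N, fcnt e i j
      ≤ ∑ i ∈ A, ∑ j ∈ B, fcnt e i j := by
  have hB : B.card = N - k := by
    have := Finset.card_union_of_disjoint hd
    rw [hU, Finset.card_range] at this
    omega
  have hUL : Finset.range k ∪ Finset.Ico k N = Finset.range N := by
    rw [Finset.range_eq_Ico, Finset.Ico_union_Ico_eq_Ico (by omega) hk, Finset.range_eq_Ico]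
  have hdL : Disjoint (Finset.range k) (Finset.Ico k N) := by
    rw [Finset.range_eq_Ico]
    exact Finset.Ico_disjoint_Ico_consecutive 0 k N
  have h1 := sum_f_union e A B hd
  have h2 := sum_f_union e (Finset.range k) (Finset.Ico k N) hdL
  rw [hU] at h1
  rw [hUL] at h2
  have hPA : Pcnt A e ≤ mcnt k e := hA ▸ Pcnt_le e A
  have hPB : Pcnt B e ≤ mcnt (N - k) e := hB ▸ Pcnt_le e B
  have hPL1 : Pcnt (Finset.range k) e = mcnt k e := by
    have := Pcnt_Ico e 0 k
    rw [Finset.range_eq_Ico]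
    simpa using this
  have hPL2 : Pcnt (Finset.Ico k N) e = mcnt (N - k) e := by
    rw [show N = k + (N - k) by omega, Pcnt_Ico]
    congr 1; omega
  omega

/- ### Abel summation -/

lemma telescope (J : ℕ → ℝ) (d D : ℕ) (h2 : d ≤ D) :
    J d = J D + ∑ e ∈ Finset.Ico d D, (J e - J (e + 1)) := by
  have : ∑ e ∈ Finset.Ico d D, (J e - J (e + 1)) = J d - J D := by
    rw [Finset.sum_Ico_eq_sum_range]
    have := Finset.sum_range_sub' (f := fun i => J (d + i)) (n := D - d)
    rw [show ∑ i ∈ Finset.range (D - d), (J (d + i) - J (d + i + 1))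
        = ∑ i ∈ Finset.range (D - d), ((fun i => J (d + i)) i - (fun i => J (d + i)) (i + 1)) by
      apply Finset.sum_congr rfl; intro i _; simp [Nat.add_assoc]]
    rw [this]
    congr 2
    omega
  rw [this]; ring

lemma abel_identity (J : ℕ → ℝ) (D : ℕ) (A B : Finset ℕ)
    (hd : ∀ i ∈ A, ∀ j ∈ B, 1 ≤ Nat.dist i j ∧ Nat.dist i j ≤ D) :
    ∑ i ∈ A, ∑ j ∈ B, J (Nat.dist i j)
      = (A.card * B.card : ℝ) * J D
        + ∑ e ∈ Finset.Ico 1 D, (J e - J (e + 1)) * ∑ i ∈ A, ∑ j ∈ B, (fcnt e i j : ℝ) := by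
  have step : ∀ i ∈ A, ∀ j ∈ B, J (Nat.dist i j)
      = J D + ∑ e ∈ Finset.Ico 1 D, (if Nat.dist i j ≤ e then J e - J (e+1) else 0) := by
    intro i hi j hj
    obtain ⟨hd1, hd2⟩ := hd i hi j hj
    rw [telescope J (Nat.dist i j) D hd2]
    congr 1
    rw [show Finset.Ico (Nat.dist i j) D
        = (Finset.Ico 1 D).filter (fun e => Nat.dist i j ≤ e) by
      ext x; simp only [Finset.mem_filter, Finset.mem_Ico]; omega]
    rw [Finset.sum_filter]
  calc ∑ i ∈ A, ∑ j ∈ B, J (Nat.dist i j)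
      = ∑ i ∈ A, ∑ j ∈ B,
          (J D + ∑ e ∈ Finset.Ico 1 D, (if Nat.dist i j ≤ e then J e - J (e+1) else 0)) := by
        apply Finset.sum_congr rfl; intro i hi
        apply Finset.sum_congr rfl; intro j hj
        exact step i hi j hj
    _ = (A.card * B.card : ℝ) * J D
        + ∑ i ∈ A, ∑ j ∈ B, ∑ e ∈ Finset.Ico 1 D,
            (if Nat.dist i j ≤ e then J e - J (e+1) else 0) := by
        simp only [Finset.sum_add_distrib, Finset.sum_const, nsmul_eq_mul]
        ring
    _ = (A.card * B.card : ℝ)* J D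
        + ∑ e ∈ Finset.Ico 1 D, (J e - J (e + 1)) * ∑ i ∈ A, ∑ j ∈ B, (fcnt e i j : ℝ) := by
        congr 1
        calc ∑ i ∈ A, ∑ j ∈ B, ∑ e ∈ Finset.Ico 1 D,
                (if Nat.dist i j ≤ e then J e - J (e+1) else 0)
            = ∑ i ∈ A, ∑ e ∈ Finset.Ico 1 D, ∑ j ∈ B,
                (if Nat.dist i j ≤ e then J e - J (e+1) else 0) :=
              Finset.sum_congr rfl fun i _ => Finset.sum_comm
          _ = ∑ e ∈ Finset.Ico 1 D, ∑ i ∈ A, ∑ j ∈ B,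
                (if Nat.dist i j ≤ e then J e - J (e+1) else 0) := Finset.sum_comm
          _ = ∑ e ∈ Finset.Ico 1 D, (J e - J (e + 1)) * ∑ i ∈ A, ∑ j ∈ B, (fcnt e i j : ℝ) := by
              apply Finset.sum_congr rfl; intro e _
              rw [Finset.mul_sum]
              apply Finset.sum_congr rfl; intro i hi
              rw [Finset.mul_sum]
              apply Finset.sum_congr rfl; intro j hj
              have hij : i ≠ j := by
                intro h
                have := (hd i hi j hj).1
                rw [h, Nat.dist_self] at this
                omega
              simp only [fcnt, hij, ne_eq, not_false_iff, true_and]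
              split_ifs <;> simp

/-- Comparison of the weighted sums given the count comparison. -/
lemma weighted_compare (J : ℕ → ℝ) (D : ℕ)
    (hdec : ∀ n, 1 ≤ n → J (n + 1) < J n)
    (A B A' B' : Finset ℕ)
    (hcard : A.card * B.card = A'.card * B'.card)
    (hdAB : ∀ i ∈ A, ∀ j ∈ B, 1 ≤ Nat.dist i j ∧ Nat.dist i j ≤ D)
    (hdAB' : ∀ i ∈ A', ∀ j ∈ B', 1 ≤ Nat.dist i j ∧ Nat.dist i j ≤ D)
    (hcnt : ∀ e, ∑ i ∈ A', ∑ j ∈ B', fcnt e i j ≤ ∑ i ∈ A, ∑ j ∈ B, fcnt e i j) :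
    ∑ i ∈ A', ∑ j ∈ B', J (Nat.dist i j) ≤ ∑ i ∈ A, ∑ j ∈ B, J (Nat.dist i j) := by
  rw [abel_identity J D A B hdAB, abel_identity J D A' B' hdAB']
  have hc : (A'.card * B'.card : ℝ) = (A.card * B.card : ℝ) := by
    push_cast
    exact_mod_cast congrArg (fun n : ℕ => (n : ℝ)) hcard.symm
  rw [hc]
  apply add_le_add le_rfl
  apply Finset.sum_le_sum
  intro e he
  have he1 : 1 ≤ e := (Finset.mem_Ico.mp he).1
  have hΔ : 0 ≤ J e - J (e + 1) := le_of_lt (sub_pos.mpr (hdec e he1))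
  apply mul_le_mul_of_nonneg_left _ hΔ
  have : ∑ i ∈ A', ∑ j ∈ B', (fcnt e i j : ℝ) = ((∑ i ∈ A', ∑ j ∈ B', fcnt e i j : ℕ) : ℝ) := by
    push_cast; rfl
  rw [this]
  have : ∑ i ∈ A, ∑ j ∈ B, (fcnt e i j : ℝ) = ((∑ i ∈ A, ∑ j ∈ B, fcnt e i j : ℕ) : ℝ) := by
    push_cast; rfl
  rw [this]
  exact_mod_cast hcnt e

/-- Proposition 4.1 (inequality): for any configuration with exactly `k` plus spins,
`∑_{i≠j} J(|i-j|) 𝟙[σᵢ ≠ σⱼ] ≥ 2 ∑_{i=1}^{k} ∑_{j=k+1}^{N} J(|i-j|)`. -/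
theorem disagreement_sum_lower_bound (N k : ℕ) (hN : 1 ≤ N) (hk : k ≤ N)
    (J : ℕ → ℝ) (hpos : ∀ n, 1 ≤ n → 0 < J n) (hdec : ∀ n, 1 ≤ n → J (n + 1) < J n)
    (σ : Fin N → ℝ) (hσ : IsConfig σ)
    (hcard : (Finset.univ.filter fun i => σ i = 1).card = k) :
    2 * ∑ i ∈ Finset.range k, ∑ j ∈ Finset.Ico k N, J (j - i) ≤
      ∑ i : Fin N, ∑ j : Fin N,
        if i ≠ j ∧ σ i ≠ σ j then J (Nat.dist (i : ℕ) (j : ℕ)) else 0 := by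
  classical
  -- extend σ to ℕ
  set τ : ℕ → ℝ := fun n => if h : n < N then σ ⟨n, h⟩ else 0 with hτ
  have hτval : ∀ i : Fin N, τ (i : ℕ) = σ i := by
    intro i
    simp only [hτ, i.isLt, dif_pos]
  -- RHS as a sum over ℕ
  set Fr : ℕ → ℕ → ℝ := fun a b => if a ≠ b ∧ τ a ≠ τ b then J (Nat.dist a b) else 0 with hFr
  have hRHS : (∑ i : Fin N, ∑ j : Fin N,
      if i ≠ j ∧ σ i ≠ σ j then J (Nat.dist (i : ℕ) (j : ℕ)) else 0)
      = ∑ i ∈ Finset.range N, ∑ j ∈ Finset.range N, Fr i j := by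
    rw [← Fin.sum_univ_eq_sum_range (fun a => ∑ j ∈ Finset.range N, Fr a j)]
    apply Finset.sum_congr rfl
    intro i _
    rw [← Fin.sum_univ_eq_sum_range (fun b => Fr (i : ℕ) b)]
    apply Finset.sum_congr rfl
    intro j _
    simp only [hFr, hτval]
    congr 1
    simp [Fin.val_inj, ne_eq]
  rw [hRHS]
  -- the partition
  set A : Finset ℕ := (Finset.range N).filter (fun n => τ n = 1) with hA
  set B : Finset ℕ := (Finset.range N).filter (fun n => ¬ τ n = 1) with hB
  have hU : A ∪ B = Finset.range N := Finset.filter_union_filter_not_eq _ _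
  have hdisj : Disjoint A B := Finset.disjoint_filter_filter_not _ _ _
  have hAcard : A.card = k := by
    have himg : A = (Finset.univ.filter fun i => σ i = 1).image Fin.val := by
      ext n
      simp only [hA, Finset.mem_filter, Finset.mem_range, Finset.mem_image,
        Finset.mem_univ, true_and]
      constructor
      · rintro ⟨hn, ht⟩
        exact ⟨⟨n, hn⟩, by rwa [← hτval ⟨n, hn⟩], rfl⟩
      · rintro ⟨i, hi, rfl⟩
        exact ⟨i.isLt, by rwa [hτval]⟩
    rw [himg, Finset.card_image_of_injective _ Fin.val_injective, hcard]
  -- nonnegativity of the right-hand side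
  have hFrnn : ∀ a b : ℕ, 0 ≤ Fr a b := by
    intro a b
    simp only [hFr]
    split_ifs with h
    · exact le_of_lt (hpos _ (Nat.dist_pos_of_ne h.1))
    · exact le_refl 0
  have hRHSnn : 0 ≤ ∑ i ∈ Finset.range N, ∑ j ∈ Finset.range N, Fr i j :=
    Finset.sum_nonneg fun i _ => Finset.sum_nonneg fun j _ => hFrnn i j
  -- edge cases
  rcases Nat.eq_zero_or_pos k with rfl | hk1
  · simpa using hRHSnn
  rcases eq_or_lt_of_le hk with rfl | hkN
  · simpa [Finset.Ico_self] using hRHSnn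
  -- main case : 1 ≤ k < N
  have hAval : ∀ i ∈ A, τ i = 1 := fun i hi => (Finset.mem_filter.mp hi).2
  have hBval : ∀ j ∈ B, τ j = -1 := by
    intro j hj
    have h1 := Finset.mem_filter.mp hj
    have h2 : j < N := Finset.mem_range.mp h1.1
    rcases hσ ⟨j, h2⟩ with h | h
    · exact absurd (by rw [← hτval ⟨j, h2⟩] at h; exact h) h1.2
    · rw [← hτval ⟨j, h2⟩] at h; exact h
  have hmemlt : ∀ {S : Finset ℕ}, S = A ∨ S = B → ∀ n ∈ S, n < N := by
    rintro S (rfl | rfl) n hn <;>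
      exact Finset.mem_range.mp (Finset.mem_filter.mp hn).1
  have hneAB : ∀ i ∈ A, ∀ j ∈ B, i ≠ j := by
    intro i hi j hj h
    have h1 := hAval i hi
    have h2 := hBval j hj
    rw [h, h2] at h1
    norm_num at h1
  -- decompose the RHS
  have hFrc : ∀ a b, Fr a b = Fr b a := by
    intro a b
    simp only [hFr]
    rw [Nat.dist_comm]
    refine if_congr ⟨fun h => ⟨h.1.symm, h.2.symm⟩, fun h => ⟨h.1.symm, h.2.symm⟩⟩ rfl rfl
  have hAA : ∑ i ∈ A, ∑ j ∈ A, Fr i j = 0 := by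
    apply Finset.sum_eq_zero; intro i hi
    apply Finset.sum_eq_zero; intro j hj
    simp only [hFr]
    rw [if_neg]
    rintro ⟨-, h2⟩
    exact h2 (by rw [hAval i hi, hAval j hj])
  have hBB : ∑ i ∈ B, ∑ j ∈ B, Fr i j = 0 := by
    apply Finset.sum_eq_zero; intro i hi
    apply Finset.sum_eq_zero; intro j hj
    simp only [hFr]
    rw [if_neg]
    rintro ⟨-, h2⟩
    exact h2 (by rw [hBval i hi, hBval j hj])
  have hABv : ∑ i ∈ A, ∑ j ∈ B, Fr i j = ∑ i ∈ A, ∑ j ∈ B, J (Nat.dist i j) := by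
    apply Finset.sum_congr rfl; intro i hi
    apply Finset.sum_congr rfl; intro j hj
    simp only [hFr]
    rw [if_pos]
    exact ⟨hneAB i hi j hj, by rw [hAval i hi, hBval j hj]; norm_num⟩
  have hRHS2 : ∑ i ∈ Finset.range N, ∑ j ∈ Finset.range N, Fr i j
      = 2 * ∑ i ∈ A, ∑ j ∈ B, J (Nat.dist i j) := by
    rw [← hU, Finset.sum_union hdisj]
    have hsplit : ∀ i, ∑ j ∈ A ∪ B, Fr i j = ∑ j ∈ A, Fr i j + ∑ j ∈ B, Fr i j :=
      fun i => Finset.sum_union hdisj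
    simp only [hsplit, Finset.sum_add_distrib]
    have hBA : ∑ i ∈ B, ∑ j ∈ A, Fr i j = ∑ i ∈ A, ∑ j ∈ B, Fr i j := by
      rw [Finset.sum_comm]
      apply Finset.sum_congr rfl; intro i _
      apply Finset.sum_congr rfl; intro j _
      exact hFrc j i
    rw [hAA, hBB, hBA, hABv]
    ring
  rw [hRHS2]
  -- rewrite the LHS with Nat.dist
  have hLHS : ∑ i ∈ Finset.range k, ∑ j ∈ Finset.Ico k N, J (j - i)
      = ∑ i ∈ Finset.range k, ∑ j ∈ Finset.Ico k N, J (Nat.dist i j) := by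
    apply Finset.sum_congr rfl; intro i hi
    apply Finset.sum_congr rfl; intro j hj
    have h1 : i < k := Finset.mem_range.mp hi
    have h2 : k ≤ j := (Finset.mem_Ico.mp hj).1
    rw [Nat.dist_eq_sub_of_le (by omega)]
  rw [hLHS]
  have hBcard : B.card = N - k := by
    have := Finset.card_union_of_disjoint hdisj
    rw [hU, Finset.card_range, hAcard] at this
    omega
  -- apply the weighted comparison
  have hmain : ∑ i ∈ Finset.range k, ∑ j ∈ Finset.Ico k N, J (Nat.dist i j)
      ≤ ∑ i ∈ A, ∑ j ∈ B, J (Nat.dist i j) := by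
    apply weighted_compare J (N - 1) hdec
    · rw [hAcard, hBcard, Finset.card_range, Nat.card_Ico]
    · intro i hi j hj
      have h1 : i < N := hmemlt (Or.inl rfl) i hi
      have h2 : j < N := hmemlt (Or.inr rfl) j hj
      have h3 : i ≠ j := hneAB i hi j hj
      simp only [Nat.dist]
      omega
    · intro i hi j hj
      have h1 : i < k := Finset.mem_range.mp hi
      have h2 := Finset.mem_Ico.mp hj
      simp only [Nat.dist]
      omega
    · intro e
      exact cross_count_ge N k e hk A B hU hdisj hAcard
  linarith
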